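/- If L is a countable scattered linear order, then Aut(L), with the topology of pointwise convergence, is a CLI Polish group. -/

import Mathlib

universe u v w x

/-- A topological group is CLI if it admits a metric, compatible with its topology,
that is complete and left-invariant. -/
def IsCLI (G : Type u) [Group G] [t : TopologicalSpace G] : Prop :=
  ∃ m : MetricSpace G,
    m.toPseudoMetricSpace.toUniformSpace.toTopologicalSpace = t ∧
    @CompleteSpace G m.toPseudoMetricSpace.toUniformSpace ∧
    ∀ g h h' : G,
      @dist G m.toPseudoMetricSpace.toDist (g * h) (g * h') =
        @dist G m.toPseudoMetricSpace.toDist h h'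

/-- A (strict order) relation is scattered: it has no suborder isomorphic to `ℚ`. -/
def IsScatteredRel {X : Type u} (r : X → X → Prop) : Prop :=
  ¬∃ f : ℚ → X, ∀ q q' : ℚ, q < q' ↔ r (f q) (f q')

/-- The topology of pointwise convergence on the group of permutations of a
(discrete) set `N`. -/
def permTop (N : Type u) : TopologicalSpace (Equiv.Perm N) :=
  TopologicalSpace.induced (fun f => (f : N → N))
    (@Pi.topologicalSpace N (fun _ => N) (fun _ => ⊥))

/-- The automorphism group of a linear order `L`, as a subgroup of `Sym(L)`. -/
def orderAut (L : Type u) [LinearOrder L] : Subgroup (Equiv.Perm L) where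
  carrier := {f : Equiv.Perm L | ∀ a b : L, a ≤ b ↔ f a ≤ f b}
  one_mem' := by intro a b; rfl
  mul_mem' := by
    intro f g hf hg a b
    rw [hg a b, hf (g a) (g b)]
    rfl
  inv_mem' := by
    intro f hf a b
    have h := hf (f⁻¹ a) (f⁻¹ b)
    rw [Equiv.Perm.coe_inv, Equiv.apply_symm_apply, Equiv.apply_symm_apply] at h
    exact h.symm


set_option linter.unusedSectionVars false
set_option maxHeartbeats 1000000

namespace ScatteredCLI

variable {L : Type u} [LinearOrder L]

theorem aut_le {g : Equiv.Perm L} (hg : g ∈ orderAut L) {a b : L} :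
    a ≤ b ↔ g a ≤ g b := hg a b

theorem aut_lt {g : Equiv.Perm L} (hg : g ∈ orderAut L) {a b : L} :
    a < b ↔ g a < g b := by
  simp only [lt_iff_le_not_ge, ← aut_le hg]

theorem aut_image_uIcc {g : Equiv.Perm L} (hg : g ∈ orderAut L) (u v : L) :
    g '' Set.uIcc u v = Set.uIcc (g u) (g v) := by
  ext y
  constructor
  · rintro ⟨z, hz, rfl⟩
    rcases Set.mem_uIcc.mp hz with ⟨h1, h2⟩ | ⟨h1, h2⟩
    · exact Set.mem_uIcc.mpr (Or.inl ⟨(aut_le hg).mp h1, (aut_le hg).mp h2⟩)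
    · exact Set.mem_uIcc.mpr (Or.inr ⟨(aut_le hg).mp h1, (aut_le hg).mp h2⟩)
  · intro hy
    refine ⟨g⁻¹ y, ?_, by simp⟩
    have h1 : g (g⁻¹ y) = y := by simp
    rcases Set.mem_uIcc.mp hy with ⟨h2, h3⟩ | ⟨h2, h3⟩
    · rw [← h1] at h2 h3
      exact Set.mem_uIcc.mpr (Or.inl ⟨(aut_le hg).mpr h2, (aut_le hg).mpr h3⟩)
    · rw [← h1] at h2 h3
      exact Set.mem_uIcc.mpr (Or.inr ⟨(aut_le hg).mpr h2, (aut_le hg).mpr h3⟩)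

/-- the data of a "good" convex equivalence relation avoiding `(f x, b)`. -/
structure GoodRel (f : L → L) (b : L) (E : L → L → Prop) : Prop where
  equiv : Equivalence E
  convex : ∀ {u v w}, E u v → w ∈ Set.uIcc u v → E u w
  invar : ∀ g : Equiv.Perm L, g ∈ orderAut L → ∀ {u v}, E u v → E (g u) (g v)
  avoid : ∀ x, ¬ E (f x) b

theorem quot_mk_eq {E : L → L → Prop} (hE : Equivalence E) {u v : L} :
    Quot.mk E u = Quot.mk E v ↔ E u v :=
  ⟨fun h => hE.eqvGen_iff.mp (Quot.eqvGen_exact h), fun h => Quot.sound h⟩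

/-- the one-step refinement: finitely many `E`-classes meet the interval. -/
def stepR (E : L → L → Prop) (u v : L) : Prop :=
  (Quot.mk E '' Set.uIcc u v).Finite

theorem le_stepR {f : L → L} {b : L} {E : L → L → Prop} (hG : GoodRel f b E)
    {u v : L} (h : E u v) : stepR E u v := by
  refine (Set.finite_singleton (Quot.mk E u)).subset ?_
  rintro _ ⟨z, hz, rfl⟩
  simpa using (quot_mk_eq hG.equiv).mpr (hG.equiv.symm (hG.convex h hz))

theorem mem_uIcc_trans {x a a' z : L} (ha : a ∈ Set.uIcc x a') (hz : z ∈ Set.uIcc x a) :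
    a ∈ Set.uIcc z a' := by
  rcases Set.mem_uIcc.mp ha with ⟨h1, h2⟩ | ⟨h1, h2⟩ <;>
    rcases Set.mem_uIcc.mp hz with ⟨h3, h4⟩ | ⟨h3, h4⟩ <;>
      rw [Set.mem_uIcc]
  · exact Or.inl ⟨h4, h2⟩
  · exact Or.inl ⟨le_trans h4 h1, h2⟩
  · exact Or.inr ⟨h1, le_trans h2 h3⟩
  · exact Or.inr ⟨h1, h3⟩

theorem image_ssubset {f : L → L} {b : L} {E : L → L → Prop} (hG : GoodRel f b E)
    {x a a' : L} (ha : a ∈ Set.uIcc x a') (hne : ¬ E a a') :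
    (Quot.mk E '' Set.uIcc x a) ⊂ (Quot.mk E '' Set.uIcc x a') := by
  constructor
  · exact Set.image_mono (Set.uIcc_subset_uIcc Set.left_mem_uIcc ha)
  · intro hsub
    have : Quot.mk E a' ∈ Quot.mk E '' Set.uIcc x a :=
      hsub ⟨a', Set.right_mem_uIcc, rfl⟩
    obtain ⟨z, hz, hzq⟩ := this
    have hza' : E z a' := (quot_mk_eq hG.equiv).mp hzq
    have haz : a ∈ Set.uIcc z a' := mem_uIcc_trans ha hz
    exact hne (hG.equiv.trans (hG.equiv.symm (hG.convex hza' haz)) hza')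



section Step

variable {f : L → L} {b : L} {E : L → L → Prop}

theorem quotMap_injective (hG : GoodRel f b E) {g : Equiv.Perm L} (hg : g ∈ orderAut L) :
    Function.Injective (Quot.map g (fun _ _ h => hG.invar g hg h) : Quot E → Quot E) := by
  intro q q' h
  induction q using Quot.ind
  induction q' using Quot.ind
  rename_i u v
  have : E (g u) (g v) := (quot_mk_eq hG.equiv).mp h
  have h2 : E u v := by
    have := hG.invar g⁻¹ ((orderAut L).inv_mem hg) this
    simpa using this
  exact Quot.sound h2

theorem image_quot_image (hG : GoodRel f b E) {g : Equiv.Perm L} (hg : g ∈ orderAut L)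
    (J : Set L) :
    Quot.mk E '' (g '' J) =
      (Quot.map g (fun _ _ h => hG.invar g hg h) : Quot E → Quot E) '' (Quot.mk E '' J) := by
  rw [← Set.image_comp, ← Set.image_comp]
  rfl

/-- The key step: `stepR E` still avoids relating `f x` with `b`. -/
theorem stepR_avoid
    (happ : ∀ S : Finset L, ∃ g : Equiv.Perm L, g ∈ orderAut L ∧ ∀ x ∈ S, g x = f x)
    (hmiss : ∀ x, f x ≠ b) (hG : GoodRel f b E) : ∀ x, ¬ stepR E (f x) b := by
  intro x₀ hst
  obtain ⟨g₀, hg₀, hag₀⟩ := happ {x₀}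
  set a₀ := g₀⁻¹ b with ha₀
  obtain ⟨g₁, hg₁, hag₁⟩ := happ {x₀, a₀}
  set a₁ := g₁⁻¹ b with ha₁
  have hg₀x : g₀ x₀ = f x₀ := hag₀ x₀ (by simp)
  have hg₁x : g₁ x₀ = f x₀ := hag₁ x₀ (by simp)
  have hg₁a : g₁ a₀ = f a₀ := hag₁ a₀ (by simp)
  have hg₀a : g₀ a₀ = b := by simp [ha₀]
  have hg₁a1 : g₁ a₁ = b := by simp [ha₁]
  -- the images of the intervals
  have him₀ : g₀ '' Set.uIcc x₀ a₀ = Set.uIcc (f x₀) b := by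
    rw [aut_image_uIcc hg₀, hg₀x, hg₀a]
  have him₁ : g₁ '' Set.uIcc x₀ a₁ = Set.uIcc (f x₀) b := by
    rw [aut_image_uIcc hg₁, hg₁x, hg₁a1]
  have hfin : ∀ (g : Equiv.Perm L) (hg : g ∈ orderAut L) (a : L),
      g '' Set.uIcc x₀ a = Set.uIcc (f x₀) b →
      (Quot.mk E '' Set.uIcc x₀ a).Finite ∧
        (Quot.mk E '' Set.uIcc x₀ a).ncard = (Quot.mk E '' Set.uIcc (f x₀) b).ncard := by
    intro g hg a him
    have hkey : Quot.mk E '' Set.uIcc (f x₀) b =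
        (Quot.map g (fun _ _ h => hG.invar g hg h) : Quot E → Quot E) ''
          (Quot.mk E '' Set.uIcc x₀ a) := by
      rw [← him, image_quot_image hG hg]
    constructor
    · exact Set.Finite.of_finite_image (by rw [← hkey]; exact hst)
        ((quotMap_injective hG hg).injOn)
    · rw [hkey, Set.ncard_image_of_injective _ (quotMap_injective hG hg)]
  have hfin₀ := hfin g₀ hg₀ a₀ him₀
  have hfin₁ := hfin g₁ hg₁ a₁ him₁
  -- a₀ and a₁ are E-equivalent
  have hEaa : E a₀ a₁ := by
    by_contra hne
    -- a₀ and a₁ are on the same side of x₀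
    have hside : a₀ ∈ Set.uIcc x₀ a₁ ∨ a₁ ∈ Set.uIcc x₀ a₀ := by
      rcases (hmiss x₀).lt_or_gt with hlt | hlt
      · have h0 : x₀ < a₀ := (aut_lt hg₀).mpr (by rw [hg₀x, hg₀a]; exact hlt)
        have h1 : x₀ < a₁ := (aut_lt hg₁).mpr (by rw [hg₁x, hg₁a1]; exact hlt)
        rcases le_total a₀ a₁ with h | h
        · exact Or.inl (Set.mem_uIcc.mpr (Or.inl ⟨h0.le, h⟩))
        · exact Or.inr (Set.mem_uIcc.mpr (Or.inl ⟨h1.le, h⟩))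
      · have h0 : a₀ < x₀ := (aut_lt hg₀).mpr (by rw [hg₀x, hg₀a]; exact hlt)
        have h1 : a₁ < x₀ := (aut_lt hg₁).mpr (by rw [hg₁x, hg₁a1]; exact hlt)
        rcases le_total a₀ a₁ with h | h
        · exact Or.inr (Set.mem_uIcc.mpr (Or.inr ⟨h, h1.le⟩))
        · exact Or.inl (Set.mem_uIcc.mpr (Or.inr ⟨h, h0.le⟩))
    rcases hside with hmem | hmem
    · have hss := image_ssubset hG hmem hne
      have hlt := Set.ncard_lt_ncard hss hfin₁.1
      rw [hfin₀.2, hfin₁.2] at hlt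
      exact lt_irrefl _ hlt
    · have hss := image_ssubset hG hmem (fun h => hne (hG.equiv.symm h))
      have hlt := Set.ncard_lt_ncard hss hfin₀.1
      rw [hfin₀.2, hfin₁.2] at hlt
      exact lt_irrefl _ hlt
  -- transport by g₁ : E (f a₀) b, contradicting avoidance
  have := hG.invar g₁ hg₁ hEaa
  rw [hg₁a, hg₁a1] at this
  exact hG.avoid a₀ this

theorem goodRel_stepR
    (happ : ∀ S : Finset L, ∃ g : Equiv.Perm L, g ∈ orderAut L ∧ ∀ x ∈ S, g x = f x)
    (hmiss : ∀ x, f x ≠ b) (hG : GoodRel f b E) : GoodRel f b (stepR E) := by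
  refine ⟨⟨?_, ?_, ?_⟩, ?_, ?_, stepR_avoid happ hmiss hG⟩
  · intro u
    unfold stepR
    rw [Set.uIcc_self]
    simp
  · intro u v h
    unfold stepR at h ⊢
    rwa [Set.uIcc_comm]
  · intro u v w h1 h2
    unfold stepR at h1 h2 ⊢
    refine ((h1.union h2).subset ?_)
    rw [← Set.image_union]
    exact Set.image_mono (Set.uIcc_subset_uIcc_union_uIcc)
  · intro u v w h hw
    exact h.subset (Set.image_mono (Set.uIcc_subset_uIcc Set.left_mem_uIcc hw))
  · intro g hg u v h
    unfold stepR at h ⊢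
    rw [← aut_image_uIcc hg, image_quot_image hG hg]
    exact h.image _

end Step

section Surj

variable [Countable L]

theorem approx_surj (hscat : IsScatteredRel ((· < ·) : L → L → Prop))
    (f : L → L)
    (happ : ∀ S : Finset L, ∃ g : Equiv.Perm L, g ∈ orderAut L ∧ ∀ x ∈ S, g x = f x) :
    Function.Surjective f := by
  intro b
  by_contra hb
  push_neg at hb
  have hmiss : ∀ x, f x ≠ b := hb
  classical
  set 𝒮 : Set (Set (L × L)) := {s | GoodRel f b fun u v => (u, v) ∈ s} with h𝒮
  have hdiag : {p : L × L | p.1 = p.2} ∈ 𝒮 := by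
    refine ⟨⟨fun _ => rfl, fun h => h.symm, fun h h' => h.trans h'⟩, ?_, ?_, ?_⟩
    · intro u v w h hw
      have : w ∈ Set.uIcc u u := by
        have hh : u = v := h
        rwa [← hh] at hw
      rw [Set.uIcc_self] at this
      exact (Set.mem_singleton_iff.mp this).symm
    · intro g hg u v h
      exact congrArg g h
    · intro x h
      exact hmiss x h
  obtain ⟨M, -, hM⟩ := zorn_subset_nonempty 𝒮 (fun c hc hchain hne => by
    refine ⟨⋃₀ c, ⟨⟨?_, ?_, ?_⟩, ?_, ?_, ?_⟩, fun s hs => Set.subset_sUnion_of_mem hs⟩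
    · intro u
      obtain ⟨s, hs⟩ := hne
      exact ⟨s, hs, (hc hs).equiv.refl u⟩
    · rintro u v ⟨s, hs, h⟩
      exact ⟨s, hs, (hc hs).equiv.symm h⟩
    · rintro u v w ⟨s₁, hs₁, h₁⟩ ⟨s₂, hs₂, h₂⟩
      rcases hchain.total hs₁ hs₂ with hsub | hsub
      · exact ⟨s₂, hs₂, (hc hs₂).equiv.trans (hsub h₁) h₂⟩
      · exact ⟨s₁, hs₁, (hc hs₁).equiv.trans h₁ (hsub h₂)⟩
    · rintro u v w ⟨s, hs, h⟩ hw
      exact ⟨s, hs, (hc hs).convex h hw⟩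
    · rintro g hg u v ⟨s, hs, h⟩
      exact ⟨s, hs, (hc hs).invar g hg h⟩
    · rintro x ⟨s, hs, h⟩
      exact (hc hs).avoid x h) _ hdiag
  set E : L → L → Prop := fun u v => (u, v) ∈ M with hE
  have hGE : GoodRel f b E := hM.1
  have hs' : {p : L × L | stepR E p.1 p.2} ∈ 𝒮 := goodRel_stepR happ hmiss hGE
  have hsub : M ⊆ {p : L × L | stepR E p.1 p.2} := fun p hp => by
    have : E p.1 p.2 := hp
    exact le_stepR hGE this
  have hclosed : ∀ u v, stepR E u v → E u v := fun u v h => hM.2 hs' hsub h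
  -- the quotient is a countable dense nontrivial linear order
  have cls_lt : ∀ u v u' v' : L, ¬ E u v → u < v → E u u' → E v v' → u' < v' := by
    intro u v u' v' hne hlt h1 h2
    by_contra hcon
    push_neg at hcon
    rcases le_or_gt v' u with h | h
    · have hvu : E v' u := hGE.convex (hGE.equiv.symm h2)
        (Set.mem_uIcc.mpr (Or.inl ⟨h, hlt.le⟩))
      exact hne (hGE.equiv.trans (hGE.equiv.symm hvu) (hGE.equiv.symm h2))
    · have huv : E u v' := hGE.convex h1 (Set.mem_uIcc.mpr (Or.inl ⟨h.le, hcon⟩))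
      exact hne (hGE.equiv.trans huv (hGE.equiv.symm h2))
  have hout : ∀ z : L, E (Quot.mk E z).out z :=
    fun z => (quot_mk_eq hGE.equiv).mp (Quot.out_eq _)
  letI : LinearOrder (Quot E) :=
    { le := fun q q' => E q.out q'.out ∨ q.out < q'.out
      le_refl := fun q => Or.inl (hGE.equiv.refl _)
      le_trans := by
        intro q r s h1 h2
        rcases h1 with h1 | h1 <;> rcases h2 with h2 | h2
        · exact Or.inl (hGE.equiv.trans h1 h2)
        · by_cases hE1 : E r.out s.out
          · exact Or.inl (hGE.equiv.trans h1 hE1)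
          · exact Or.inr (cls_lt _ _ _ _ hE1 h2 (hGE.equiv.symm h1) (hGE.equiv.refl _))
        · by_cases hE1 : E q.out r.out
          · exact Or.inl (hGE.equiv.trans hE1 h2)
          · exact Or.inr (cls_lt _ _ _ _ hE1 h1 (hGE.equiv.refl _) h2)
        · exact Or.inr (h1.trans h2)
      le_antisymm := by
        intro q q' h1 h2
        have hEq : E q.out q'.out := by
          rcases h1 with h1 | h1
          · exact h1
          · rcases h2 with h2 | h2
            · exact hGE.equiv.symm h2
            · exact absurd h1 (not_lt_of_gt h2)
        have := (quot_mk_eq hGE.equiv).mpr hEq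
        rwa [Quot.out_eq, Quot.out_eq] at this
      le_total := by
        intro q q'
        rcases le_total q.out q'.out with h | h
        · rcases h.lt_or_eq with h | h
          · exact Or.inl (Or.inr h)
          · exact Or.inl (Or.inl (h ▸ hGE.equiv.refl _))
        · rcases h.lt_or_eq with h | h
          · exact Or.inr (Or.inr h)
          · exact Or.inr (Or.inl (h ▸ hGE.equiv.refl _))
      toDecidableLE := fun _ _ => Classical.propDecidable _ }
  have hltc : ∀ q q' : Quot E, q < q' → ¬ E q.out q'.out ∧ q.out < q'.out := by
    intro q q' h
    rw [lt_iff_le_not_ge] at h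
    obtain ⟨h1, h2⟩ := h
    have hnE : ¬ E q.out q'.out := fun hE => h2 (Or.inl (hGE.equiv.symm hE))
    rcases h1 with h1 | h1
    · exact absurd h1 hnE
    · exact ⟨hnE, h1⟩
  have hltc' : ∀ q q' : Quot E, ¬ E q.out q'.out → q.out < q'.out → q < q' := by
    intro q q' h1 h2
    rw [lt_iff_le_not_ge]
    refine ⟨Or.inr h2, ?_⟩
    rintro (h | h)
    · exact h1 (hGE.equiv.symm h)
    · exact absurd h2 (not_lt_of_gt h)
  haveI : DenselyOrdered (Quot E) := by
    constructor
    intro q q' hlt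
    obtain ⟨hnE, hlt'⟩ := hltc q q' hlt
    have hnstep : ¬ stepR E q.out q'.out := fun h => hnE (hclosed _ _ h)
    have hz : ∃ z ∈ Set.uIcc q.out q'.out, ¬ E z q.out ∧ ¬ E z q'.out := by
      by_contra hcon
      push_neg at hcon
      refine hnstep (((Set.finite_singleton (Quot.mk E q.out)).insert
        (Quot.mk E q'.out)).subset ?_)
      rintro _ ⟨z, hz, rfl⟩
      by_cases hE1 : E z q.out
      · exact Or.inr (Set.mem_singleton_iff.mpr ((quot_mk_eq hGE.equiv).mpr hE1))
      · exact Or.inl ((quot_mk_eq hGE.equiv).mpr (hcon z hz hE1))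
    obtain ⟨z, hzI, hz1, hz2⟩ := hz
    rw [Set.uIcc_of_le hlt'.le] at hzI
    obtain ⟨hz3, hz4⟩ := hzI
    have huz : q.out < z := lt_of_le_of_ne hz3 (fun h => hz1 (h ▸ hGE.equiv.refl _))
    have hzv : z < q'.out := lt_of_le_of_ne hz4 (fun h => hz2 (h ▸ hGE.equiv.refl _))
    refine ⟨Quot.mk E z, hltc' _ _ ?_ ?_, hltc' _ _ ?_ ?_⟩
    · intro h
      exact hz1 (hGE.equiv.symm (hGE.equiv.trans h (hout z)))
    · exact cls_lt _ _ _ _ (fun h => hz1 (hGE.equiv.symm h)) huz (hGE.equiv.refl _)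
        (hGE.equiv.symm (hout z))
    · intro h
      exact hz2 (hGE.equiv.trans (hGE.equiv.symm (hout z)) h)
    · exact cls_lt _ _ _ _ hz2 hzv (hGE.equiv.symm (hout z)) (hGE.equiv.refl _)
  haveI : Nontrivial (Quot E) :=
    ⟨⟨Quot.mk E (f b), Quot.mk E b, fun h => hGE.avoid b ((quot_mk_eq hGE.equiv).mp h)⟩⟩
  obtain ⟨e⟩ := Order.embedding_from_countable_to_dense (α := ℚ) (β := Quot E)
  have hσ : StrictMono (fun q : ℚ => (e q).out) := by
    intro q q' h
    exact (hltc _ _ (e.strictMono h)).2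
  exact hscat ⟨_, fun q q' => (hσ.lt_iff_lt).symm⟩

end Surj

end ScatteredCLI

namespace ScatteredCLI
open scoped Classical

open scoped Classical

variable {L : Type u} [LinearOrder L]

/-- the set of codes where two automorphisms differ -/
def dset (c : L → ℕ) (g h : ↥(orderAut L)) : Set ℕ :=
  {n | ∃ x, c x = n ∧ (g : Equiv.Perm L) x ≠ (h : Equiv.Perm L) x}

noncomputable def pd (c : L → ℕ) (g h : ↥(orderAut L)) : ℝ :=
  if g = h then 0 else (2⁻¹ : ℝ) ^ sInf (dset c g h)

theorem dset_nonempty {c : L → ℕ} {g h : ↥(orderAut L)} (hne : g ≠ h) :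
    (dset c g h).Nonempty := by
  have : ∃ x, (g : Equiv.Perm L) x ≠ (h : Equiv.Perm L) x := by
    by_contra hcon
    push_neg at hcon
    exact hne (Subtype.ext (Equiv.ext hcon))
  obtain ⟨x, hx⟩ := this
  exact ⟨c x, x, rfl, hx⟩

theorem pd_self (c : L → ℕ) (g : ↥(orderAut L)) : pd c g g = 0 := by simp [pd]

theorem pd_comm (c : L → ℕ) (g h : ↥(orderAut L)) : pd c g h = pd c h g := by
  have hs : dset c g h = dset c h g := by
    ext n
    constructor <;> rintro ⟨x, rfl, hx⟩ <;> exact ⟨x, rfl, hx.symm⟩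
  unfold pd
  rw [hs]
  by_cases he : g = h
  · rw [if_pos he, if_pos he.symm]
  · rw [if_neg he, if_neg (fun hh => he hh.symm)]

theorem pd_nonneg (c : L → ℕ) (g h : ↥(orderAut L)) : 0 ≤ pd c g h := by
  unfold pd
  split
  · exact le_refl 0
  · positivity

theorem pd_lt_iff {c : L → ℕ} (hc : Function.Injective c) {g h : ↥(orderAut L)} {n : ℕ} :
    pd c g h < (2⁻¹ : ℝ) ^ n ↔
      ∀ x, c x ≤ n → (g : Equiv.Perm L) x = (h : Equiv.Perm L) x := by
  by_cases he : g = h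
  · subst he
    constructor
    · intro _ x _; rfl
    · intro _
      rw [pd_self]
      positivity
  · rw [pd, if_neg he, pow_lt_pow_iff_right_of_lt_one₀ (by norm_num) (by norm_num)]
    constructor
    · intro hlt x hx
      by_contra hne
      have hmem : c x ∈ dset c g h := ⟨x, rfl, hne⟩
      have := Nat.sInf_le hmem
      omega
    · intro hagree
      obtain ⟨x, hx, hxne⟩ := Nat.sInf_mem (dset_nonempty (c := c) he)
      by_contra h'
      push_neg at h'
      exact hxne (hagree x (by omega))

theorem pd_eq_zero {c : L → ℕ} {g h : ↥(orderAut L)} (h0 : pd c g h = 0) : g = h := by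
  by_contra hne
  rw [pd, if_neg hne] at h0
  have : (0:ℝ) < (2⁻¹ : ℝ) ^ sInf (dset c g h) := by positivity
  linarith

theorem pd_triangle (c : L → ℕ) (g h k : ↥(orderAut L)) :
    pd c g k ≤ pd c g h + pd c h k := by
  by_cases hgk : g = k
  · rw [pd, if_pos hgk]
    exact add_nonneg (pd_nonneg c g h) (pd_nonneg c h k)
  · have key : pd c g k ≤ pd c g h ∨ pd c g k ≤ pd c h k := by
      rw [pd, if_neg hgk]
      obtain ⟨x, hx, hne⟩ := Nat.sInf_mem (dset_nonempty (c := c) hgk)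
      by_cases h1 : (g : Equiv.Perm L) x = (h : Equiv.Perm L) x
      · right
        have hne2 : (h : Equiv.Perm L) x ≠ (k : Equiv.Perm L) x := by
          rw [← h1]; exact hne
        have hnehk : h ≠ k := fun hh => hne2 (by rw [hh])
        rw [pd, if_neg hnehk]
        refine pow_le_pow_of_le_one (by norm_num) (by norm_num) ?_
        rw [← hx]
        exact Nat.sInf_le ⟨x, rfl, hne2⟩
      · left
        have hnegh : g ≠ h := fun hh => h1 (by rw [hh])
        rw [pd, if_neg hnegh]
        refine pow_le_pow_of_le_one (by norm_num) (by norm_num) ?_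
        rw [← hx]
        exact Nat.sInf_le ⟨x, rfl, h1⟩
    rcases key with hk | hk
    · exact hk.trans (le_add_of_nonneg_right (pd_nonneg c h k))
    · exact hk.trans (le_add_of_nonneg_left (pd_nonneg c g h))

theorem pd_left_inv (c : L → ℕ) (g h h' : ↥(orderAut L)) :
    pd c (g * h) (g * h') = pd c h h' := by
  have hs : dset c (g * h) (g * h') = dset c h h' := by
    ext n
    constructor <;> rintro ⟨x, rfl, hx⟩ <;> refine ⟨x, rfl, ?_⟩
    · intro hh
      exact hx (by simp [Equiv.Perm.mul_apply, hh])
    · intro hh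
      have : ((g : Equiv.Perm L)) ((h : Equiv.Perm L) x) =
          ((g : Equiv.Perm L)) ((h' : Equiv.Perm L) x) := hh
      exact hx ((g : Equiv.Perm L).injective this)
  have hiff : (g * h = g * h') ↔ h = h' :=
    ⟨fun hh => mul_left_cancel hh, fun hh => by rw [hh]⟩
  unfold pd
  rw [hs]
  by_cases he : h = h'
  · rw [if_pos he, if_pos (hiff.mpr he)]
  · rw [if_neg he, if_neg (fun hh => he (hiff.mp hh))]



end ScatteredCLI

/-- If `L` is a countable scattered linear order then its automorphism group, with the
topology of pointwise convergence, is a CLI Polish group. -/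
theorem scattered_orderAut_is_CLI_polish (L : Type u) [LinearOrder L] [Countable L]
    (hscat : IsScatteredRel ((· < ·) : L → L → Prop)) :
    letI : TopologicalSpace (Equiv.Perm L) := permTop L
    IsTopologicalGroup ↥(orderAut L) ∧ PolishSpace ↥(orderAut L) ∧ IsCLI ↥(orderAut L) := by
  classical
  obtain ⟨c, hc⟩ := exists_injective_nat L
  letI : TopologicalSpace L := ⊥
  haveI : DiscreteTopology L := ⟨rfl⟩
  letI : TopologicalSpace (Equiv.Perm L) := permTop L
  have hind : (instTopologicalSpaceSubtype : TopologicalSpace ↥(orderAut L)) =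
      TopologicalSpace.induced (fun g : ↥(orderAut L) => ⇑(g : Equiv.Perm L))
        (Pi.topologicalSpace (t₂ := fun _ : L => (⊥ : TopologicalSpace L))) := by
    show TopologicalSpace.induced Subtype.val (permTop L) = _
    rw [permTop, induced_compose]
    rfl
  have hρcont : Continuous (fun g : ↥(orderAut L) => ⇑(g : Equiv.Perm L)) := by
    rw [continuous_iff_le_induced]
    exact le_of_eq hind
  have hcyl : ∀ (x y : L), IsOpen {g : ↥(orderAut L) | (g : Equiv.Perm L) x = y} := by
    intro x y
    have h1 : {g : ↥(orderAut L) | (g : Equiv.Perm L) x = y} =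
        (fun g : ↥(orderAut L) => ⇑(g : Equiv.Perm L)) ⁻¹'
          ((fun f : L → L => f x) ⁻¹' {y}) := rfl
    rw [h1]
    exact hρcont.isOpen_preimage _ ((continuous_apply x).isOpen_preimage _ (isOpen_discrete _))
  -- the compatibility of the metric with the topology
  have Hchar : ∀ s : Set ↥(orderAut L),
      IsOpen s ↔ ∀ g ∈ s, ∃ ε > 0, ∀ h', ScatteredCLI.pd c g h' < ε → h' ∈ s := by
    intro s
    constructor
    · intro hs g hg
      rw [hind, isOpen_induced_iff] at hs
      obtain ⟨U, hU, hUs⟩ := hs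
      rw [isOpen_pi_iff] at hU
      have hgU : (fun x => (g : Equiv.Perm L) x) ∈ U := by
        rw [← hUs] at hg; exact hg
      obtain ⟨I, uu, h1, h2⟩ := hU _ hgU
      refine ⟨(2⁻¹ : ℝ) ^ (I.sup c), by positivity, fun h' hlt => ?_⟩
      have hagree := (ScatteredCLI.pd_lt_iff hc).mp hlt
      rw [← hUs]
      apply h2
      intro x hx
      have : (h' : Equiv.Perm L) x = (g : Equiv.Perm L) x :=
        (hagree x (Finset.le_sup hx)).symm
      show (h' : Equiv.Perm L) x ∈ uu x
      rw [this]
      exact (h1 x hx).2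
    · intro hε
      choose ε hε0 hball using hε
      choose N hN using fun (g : ↥(orderAut L)) (hg : g ∈ s) =>
        exists_pow_lt_of_lt_one (hε0 g hg) (by norm_num : (2⁻¹ : ℝ) < 1)
      have hopen : ∀ (g : ↥(orderAut L)) (n : ℕ),
          IsOpen {h' : ↥(orderAut L) |
            ∀ x, c x ≤ n → (h' : Equiv.Perm L) x = (g : Equiv.Perm L) x} := by
        intro g n
        have heq : {h' : ↥(orderAut L) |
              ∀ x, c x ≤ n → (h' : Equiv.Perm L) x = (g : Equiv.Perm L) x} =
            ⋂ x ∈ c ⁻¹' Set.Iic n,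
              {h' : ↥(orderAut L) | (h' : Equiv.Perm L) x = (g : Equiv.Perm L) x} := by
          ext h'
          simp only [Set.mem_setOf_eq, Set.mem_iInter, Set.mem_preimage, Set.mem_Iic]
        rw [heq]
        exact Set.Finite.isOpen_biInter ((Set.finite_Iic n).preimage hc.injOn)
          fun x _ => hcyl x _
      have hset : s = ⋃ g : s, {h' : ↥(orderAut L) |
          ∀ x, c x ≤ N g.1 g.2 → (h' : Equiv.Perm L) x = (g.1 : Equiv.Perm L) x} := by
        ext h'
        simp only [Set.mem_iUnion, Set.mem_setOf_eq]
        constructor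
        · intro hh
          exact ⟨⟨h', hh⟩, fun x _ => rfl⟩
        · rintro ⟨g, hag⟩
          apply hball g.1 g.2
          refine lt_trans ?_ (hN g.1 g.2)
          exact (ScatteredCLI.pd_lt_iff hc).mpr fun x hx => (hag x hx).symm
      rw [hset]
      exact isOpen_iUnion fun g => hopen g.1 (N g.1 g.2)
  let m : MetricSpace ↥(orderAut L) :=
    MetricSpace.ofDistTopology (ScatteredCLI.pd c) (ScatteredCLI.pd_self c)
      (ScatteredCLI.pd_comm c) (ScatteredCLI.pd_triangle c) Hchar
      (fun _ _ h0 => ScatteredCLI.pd_eq_zero h0)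
  have hTeq : m.toUniformSpace.toTopologicalSpace =
      (inferInstance : TopologicalSpace ↥(orderAut L)) := rfl
  -- completeness
  have hcomplete : @CompleteSpace _ m.toUniformSpace := by
    letI := m
    apply Metric.complete_of_cauchySeq_tendsto
    intro u hu
    rw [Metric.cauchySeq_iff] at hu
    have hstab : ∀ x : L, ∃ Nx, ∀ n ≥ Nx,
        (u n : Equiv.Perm L) x = (u Nx : Equiv.Perm L) x := by
      intro x
      obtain ⟨Nx, hNx⟩ := hu ((2⁻¹ : ℝ) ^ (c x)) (by positivity)
      refine ⟨Nx, fun n hn => ?_⟩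
      have hd : ScatteredCLI.pd c (u n) (u Nx) < (2⁻¹ : ℝ) ^ (c x) := hNx n hn Nx le_rfl
      exact (ScatteredCLI.pd_lt_iff hc).mp hd x le_rfl
    choose N hN using hstab
    set F : L → L := fun x => (u (N x) : Equiv.Perm L) x with hFdef
    have hagreeF : ∀ x n, n ≥ N x → (u n : Equiv.Perm L) x = F x := fun x n hn => hN x n hn
    have happ : ∀ S : Finset L, ∃ g : Equiv.Perm L, g ∈ orderAut L ∧ ∀ x ∈ S, g x = F x :=
      fun S => ⟨(u (S.sup N) : Equiv.Perm L), (u (S.sup N)).2,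
        fun x hx => hagreeF x _ (Finset.le_sup hx)⟩
    have hsurj : Function.Surjective F := ScatteredCLI.approx_surj hscat F happ
    have hmono : ∀ a b : L, a ≤ b ↔ F a ≤ F b := by
      intro a b
      have h1 := hagreeF a (max (N a) (N b)) (le_max_left _ _)
      have h2 := hagreeF b (max (N a) (N b)) (le_max_right _ _)
      rw [← h1, ← h2]
      exact (u (max (N a) (N b))).2 a b
    have hinj : Function.Injective F := by
      intro a b hab
      by_contra hne
      rcases lt_or_gt_of_ne hne with h | h
      · exact h.not_ge ((hmono b a).mpr (le_of_eq hab.symm))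
      · exact h.not_ge ((hmono a b).mpr (le_of_eq hab))
    let φ : Equiv.Perm L := Equiv.ofBijective F ⟨hinj, hsurj⟩
    have hφmem : φ ∈ orderAut L := fun a b => hmono a b
    refine ⟨⟨φ, hφmem⟩, ?_⟩
    rw [Metric.tendsto_atTop]
    intro ε hε
    obtain ⟨k, hk⟩ := exists_pow_lt_of_lt_one hε (by norm_num : (2⁻¹ : ℝ) < 1)
    have hfin : (c ⁻¹' Set.Iic k).Finite := (Set.finite_Iic k).preimage hc.injOn
    refine ⟨hfin.toFinset.sup N, fun n hn => ?_⟩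
    refine lt_trans ?_ hk
    apply (ScatteredCLI.pd_lt_iff hc).mpr
    intro x hx
    have hxm : x ∈ hfin.toFinset := hfin.mem_toFinset.mpr hx
    exact hagreeF x n (le_trans (Finset.le_sup hxm) hn)
  have hSC : SecondCountableTopology ↥(orderAut L) :=
    (Topology.IsInducing.secondCountableTopology
      (⟨hind⟩ : Topology.IsInducing (fun g : ↥(orderAut L) => ⇑(g : Equiv.Perm L))))
  refine ⟨?_, ?_, ?_⟩
  · -- topological group
    refine { continuous_mul := ?_, continuous_inv := ?_ }
    · have hcont : Continuous fun p : ↥(orderAut L) × ↥(orderAut L) =>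
          (fun x => ((p.1 : Equiv.Perm L)) (((p.2 : Equiv.Perm L)) x) : L → L) := by
        apply continuous_pi
        intro x
        apply continuous_discrete_rng.mpr
        intro y
        have heq : (fun p : ↥(orderAut L) × ↥(orderAut L) =>
              ((p.1 : Equiv.Perm L)) (((p.2 : Equiv.Perm L)) x)) ⁻¹' {y} =
            ⋃ z : L, ({g : ↥(orderAut L) | (g : Equiv.Perm L) z = y} ×ˢ
              {h : ↥(orderAut L) | (h : Equiv.Perm L) x = z}) := by
          ext p
          simp only [Set.mem_preimage, Set.mem_singleton_iff, Set.mem_iUnion, Set.mem_prod,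
            Set.mem_setOf_eq]
          constructor
          · intro hp
            exact ⟨(p.2 : Equiv.Perm L) x, hp, rfl⟩
          · rintro ⟨z, h1, h2⟩
            rw [h2]
            exact h1
        rw [heq]
        exact isOpen_iUnion fun z => (hcyl z y).prod (hcyl x z)
      rw [continuous_iff_le_induced, hind, induced_compose]
      rw [hind] at hcont
      have hfun : ((fun g : ↥(orderAut L) => ⇑(g : Equiv.Perm L)) ∘
            fun p : ↥(orderAut L) × ↥(orderAut L) => p.1 * p.2) =
          fun p : ↥(orderAut L) × ↥(orderAut L) =>
            (fun x => ((p.1 : Equiv.Perm L)) (((p.2 : Equiv.Perm L)) x) : L → L) := by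
        funext p x
        simp [Equiv.Perm.mul_apply]
      rw [hfun]
      exact continuous_iff_le_induced.mp hcont
    · have hcont : Continuous fun g : ↥(orderAut L) =>
          (fun x => ((g : Equiv.Perm L)).symm x : L → L) := by
        apply continuous_pi
        intro x
        apply continuous_discrete_rng.mpr
        intro y
        have heq : (fun g : ↥(orderAut L) => ((g : Equiv.Perm L)).symm x) ⁻¹' {y} =
            {g : ↥(orderAut L) | (g : Equiv.Perm L) y = x} := by
          ext g
          simp only [Set.mem_preimage, Set.mem_singleton_iff, Set.mem_setOf_eq]
          constructor
          · intro hg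
            rw [← hg]
            simp
          · intro hg
            rw [← hg]
            simp
        rw [heq]
        exact hcyl y x
      rw [continuous_iff_le_induced, hind, induced_compose]
      rw [hind] at hcont
      have hfun : ((fun g : ↥(orderAut L) => ⇑(g : Equiv.Perm L)) ∘
            fun g : ↥(orderAut L) => g⁻¹) =
          fun g : ↥(orderAut L) => (fun x => ((g : Equiv.Perm L)).symm x : L → L) := by
        funext g x
        rfl
      rw [hfun]
      exact continuous_iff_le_induced.mp hcont
  · -- Polish
    exact { toSecondCountableTopology := hSC, complete := ⟨m, hTeq, hcomplete⟩ }
  · -- CLI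
    exact ⟨m, hTeq, hcomplete, fun g h h' => ScatteredCLI.pd_left_inv c g h h'⟩
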